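/- For every natural number n, the number of partitions of n in which every part not divisible by 3 appears exactly once (parts coprime to 3 are distinct, while parts divisible by 3 may appear with arbitrary multiplicity) equals the number of partitions of n into parts congruent to 0, 1, 3, or 5 modulo 6. -/

import Mathlib

namespace GlaisherAux
open Multiset

/-- 2-adic valuation. -/
def v (b : ℕ) : ℕ := b.factorization 2

/-- odd part. -/
def u (b : ℕ) : ℕ := b / 2 ^ v b

lemma v_spec {m : ℕ} (hm : ¬ 2 ∣ m) (hm0 : m ≠ 0) (k : ℕ) : v (2 ^ k * m) = k := by
  rw [v, Nat.factorization_mul (by positivity) hm0]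
  simp [Nat.Prime.factorization_pow, Nat.factorization_eq_zero_of_not_dvd hm,
    Nat.Prime.factorization_self Nat.prime_two]

lemma u_spec {m : ℕ} (hm : ¬ 2 ∣ m) (hm0 : m ≠ 0) (k : ℕ) : u (2 ^ k * m) = m := by
  rw [u, v_spec hm hm0, Nat.mul_div_cancel_left _ (by positivity)]

lemma decomp {b : ℕ} (hb : b ≠ 0) : 2 ^ v b * u b = b :=
  Nat.ordProj_mul_ordCompl_eq_self b 2

lemma u_odd {b : ℕ} (hb : b ≠ 0) : ¬ 2 ∣ u b :=
  Nat.not_dvd_ordCompl Nat.prime_two hb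

lemma u_pos {b : ℕ} (hb : b ≠ 0) : 0 < u b :=
  Nat.ordCompl_pos 2 hb

lemma u_not_three {b : ℕ} (h3 : ¬ 3 ∣ b) : ¬ 3 ∣ u b :=
  fun h => h3 (h.trans (Nat.ordCompl_dvd b 2))

lemma pow_mul_inj {m m' k k' : ℕ} (hm : ¬ 2 ∣ m) (hm0 : m ≠ 0) (hm' : ¬ 2 ∣ m') (hm0' : m' ≠ 0)
    (h : 2 ^ k * m = 2 ^ k' * m') : k = k' ∧ m = m' := by
  have h1 := v_spec hm hm0 k
  have h2 := u_spec hm hm0 k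
  rw [h, v_spec hm' hm0' k'] at h1
  rw [h, u_spec hm' hm0' k'] at h2
  exact ⟨h1.symm, h2.symm⟩

lemma mem_bitIndices_sum {K : Multiset ℕ} (hK : K.Nodup) (j : ℕ) :
    j ∈ ((K.map (2 ^ ·)).sum).bitIndices ↔ j ∈ K := by
  have hL : List.Pairwise (· < ·) (K.sort (· ≤ ·)) :=
    ((List.sortedLE_iff_pairwise.2 (Multiset.pairwise_sort K _)).sortedLT_of_nodup (by rwa [← Multiset.coe_nodup, Multiset.sort_eq])).pairwise
  have hsum : (K.map (2 ^ ·)).sum = (((K.sort (· ≤ ·)).map (2 ^ ·)).sum) := by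
    rw [← Multiset.sort_eq K (· ≤ ·), Multiset.map_coe, Multiset.sum_coe, Multiset.sort_eq]
  rw [hsum, Nat.bitIndices_twoPowsum hL.sortedLT, ← Multiset.mem_coe, Multiset.sort_eq]

end GlaisherAux

namespace GlaisherAux
open Multiset

lemma sum_map_ite_filter {α : Type*} (p : α → Prop) [DecidablePred p] (g : α → ℕ)
    (K : Multiset α) :
    (K.map (fun b => if p b then g b else 0)).sum = ((K.filter p).map g).sum := by
  induction K using Multiset.induction with
  | empty => simp
  | cons x K ih =>
    by_cases h : p x <;>
      simp [Multiset.filter_cons_of_pos, Multiset.filter_cons_of_neg, h, ih]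

lemma sum_map_indicator {α : Type*} [DecidableEq α] {K : Multiset α} (hK : K.Nodup) (a : α)
    (c : α → ℕ) :
    (K.map (fun m => if m = a then c m else 0)).sum = if a ∈ K then c a else 0 := by
  induction K using Multiset.induction with
  | empty => simp
  | cons x K ih =>
    obtain ⟨hx, hK'⟩ := Multiset.nodup_cons.1 hK
    rw [Multiset.map_cons, Multiset.sum_cons, ih hK']
    by_cases h : x = a
    · subst h
      simp [hx]
    · have : (a ∈ x ::ₘ K) ↔ a ∈ K := by
        simp only [Multiset.mem_cons, or_iff_right_iff_imp]
        exact fun hh => absurd hh.symm h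
      rw [if_neg h, zero_add, if_congr this rfl rfl]

lemma bind_replicate_const {s : Multiset ℕ} (c : ℕ → ℕ) (m : ℕ) :
    s.bind (fun k => Multiset.replicate (c k) m) = Multiset.replicate ((s.map c).sum) m := by
  induction s using Multiset.induction with
  | empty => simp
  | cons x s ih => simp [Multiset.replicate_add, ih]

/-- Expansion of one part coprime to 3 into copies of its odd part. -/
def expand (b : ℕ) : Multiset ℕ := Multiset.replicate (2 ^ v b) (u b)

lemma expand_sum {b : ℕ} (hb : b ≠ 0) : (expand b).sum = b := by
  simp only [expand, Multiset.sum_replicate, smul_eq_mul]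
  exact decomp hb

lemma mem_expand {a b : ℕ} (h : a ∈ expand b) : a = u b :=
  (Multiset.eq_of_mem_replicate h)

def F (s : Multiset ℕ) : Multiset ℕ :=
  s.filter (3 ∣ ·) + (s.filter (fun i => ¬ 3 ∣ i)).bind expand

def G (t : Multiset ℕ) : Multiset ℕ :=
  t.filter (3 ∣ ·) +
    (t.filter (fun i => ¬ 3 ∣ i)).dedup.bind
      (fun m => (((t.filter (fun i => ¬ 3 ∣ i)).count m).bitIndices.map (fun k => 2 ^ k * m) :
        List ℕ))

end GlaisherAux

namespace GlaisherAux
open Multiset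

lemma three_not_dvd_pow_mul {m : ℕ} (k : ℕ) (h : ¬ 3 ∣ m) : ¬ 3 ∣ 2 ^ k * m := by
  intro h'
  rcases (Nat.Prime.dvd_mul (by norm_num)).1 h' with h'' | h''
  · have := Nat.Prime.dvd_of_dvd_pow (p := 3) (by norm_num) h''
    omega
  · exact h h''

lemma bindExpand_mem {s : Multiset ℕ} (h0 : ∀ i ∈ s, i ≠ 0) {a : ℕ}
    (ha : a ∈ (s.filter (fun i => ¬ 3 ∣ i)).bind expand) : ¬ 2 ∣ a ∧ ¬ 3 ∣ a ∧ a ≠ 0 := by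
  obtain ⟨b, hb, hab⟩ := Multiset.mem_bind.1 ha
  obtain ⟨hbs, hb3⟩ := Multiset.mem_filter.1 hb
  have hb0 : b ≠ 0 := h0 b hbs
  rw [mem_expand hab]
  exact ⟨u_odd hb0, u_not_three hb3, (u_pos hb0).ne'⟩

lemma F_filter_div {s : Multiset ℕ} (h0 : ∀ i ∈ s, i ≠ 0) :
    (F s).filter (3 ∣ ·) = s.filter (3 ∣ ·) := by
  rw [F, Multiset.filter_add,
    Multiset.filter_eq_self.2 (fun a ha => (Multiset.mem_filter.1 ha).2),
    Multiset.filter_eq_nil.2 (fun a ha => (bindExpand_mem h0 ha).2.1), add_zero]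

lemma F_filter_not {s : Multiset ℕ} (h0 : ∀ i ∈ s, i ≠ 0) :
    (F s).filter (fun i => ¬ 3 ∣ i) = (s.filter (fun i => ¬ 3 ∣ i)).bind expand := by
  rw [F, Multiset.filter_add,
    Multiset.filter_eq_nil.2 (fun a ha => not_not.2 (Multiset.mem_filter.1 ha).2),
    Multiset.filter_eq_self.2 (fun a ha => (bindExpand_mem h0 ha).2.1), zero_add]

lemma F_sum {s : Multiset ℕ} (h0 : ∀ i ∈ s, i ≠ 0) : (F s).sum = s.sum := by
  rw [F, Multiset.sum_add, Multiset.sum_bind]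
  have : ((s.filter (fun i => ¬ 3 ∣ i)).map (fun b => (expand b).sum)) =
      (s.filter (fun i => ¬ 3 ∣ i)).map id := by
    refine Multiset.map_congr rfl (fun b hb => ?_)
    exact expand_sum (h0 b (Multiset.mem_filter.1 hb).1)
  rw [this, Multiset.map_id, ← Multiset.sum_add, Multiset.filter_add_not]

lemma F_pos {s : Multiset ℕ} (h0 : ∀ i ∈ s, i ≠ 0) : ∀ i ∈ F s, i ≠ 0 := by
  intro i hi
  rcases Multiset.mem_add.1 hi with h | h
  · exact h0 i (Multiset.mem_filter.1 h).1
  · exact (bindExpand_mem h0 h).2.2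

lemma F_cond {s : Multiset ℕ} (h0 : ∀ i ∈ s, i ≠ 0) : ∀ i ∈ F s, 3 ∣ i ∨ ¬ 2 ∣ i := by
  intro i hi
  rcases Multiset.mem_add.1 hi with h | h
  · exact Or.inl (Multiset.mem_filter.1 h).2
  · exact Or.inr (bindExpand_mem h0 h).1

end GlaisherAux

namespace GlaisherAux
open Multiset

lemma Bt_mem {t : Multiset ℕ} (hodd : ∀ i ∈ t, ¬ 3 ∣ i → ¬ 2 ∣ i) (h0 : ∀ i ∈ t, i ≠ 0) {m : ℕ}
    (hm : m ∈ t.filter (fun i => ¬ 3 ∣ i)) : ¬ 2 ∣ m ∧ m ≠ 0 ∧ ¬ 3 ∣ m := by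
  obtain ⟨hmt, hm3⟩ := Multiset.mem_filter.1 hm
  exact ⟨hodd m hmt hm3, h0 m hmt, hm3⟩

lemma bindG_mem {t : Multiset ℕ} {a : ℕ}
    (ha : a ∈ (t.filter (fun i => ¬ 3 ∣ i)).dedup.bind
      (fun m => (((t.filter (fun i => ¬ 3 ∣ i)).count m).bitIndices.map (fun k => 2 ^ k * m) :
        List ℕ))) :
    ∃ m k, m ∈ (t.filter (fun i => ¬ 3 ∣ i)).dedup ∧
      k ∈ ((t.filter (fun i => ¬ 3 ∣ i)).count m).bitIndices ∧ a = 2 ^ k * m := by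
  obtain ⟨m, hm, ham⟩ := Multiset.mem_bind.1 ha
  rw [Multiset.mem_coe, List.mem_map] at ham
  obtain ⟨k, hk, rfl⟩ := ham
  exact ⟨m, k, hm, hk, rfl⟩

lemma G_filter_div {t : Multiset ℕ} :
    (G t).filter (3 ∣ ·) = t.filter (3 ∣ ·) := by
  have e1 : (t.filter (3 ∣ ·)).filter (3 ∣ ·) = t.filter (3 ∣ ·) :=
    Multiset.filter_eq_self.2 (fun a ha => (Multiset.mem_filter.1 ha).2)
  have e2 : ((t.filter (fun i => ¬ 3 ∣ i)).dedup.bind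
      (fun m => (((t.filter (fun i => ¬ 3 ∣ i)).count m).bitIndices.map (fun k => 2 ^ k * m) :
        List ℕ))).filter (3 ∣ ·) = 0 := by
    refine Multiset.filter_eq_nil.2 (fun a ha => ?_)
    obtain ⟨m, k, hm, -, rfl⟩ := bindG_mem ha
    exact three_not_dvd_pow_mul k (Multiset.mem_filter.1 (Multiset.mem_dedup.1 hm)).2
  rw [G, Multiset.filter_add, e1, e2, add_zero]

lemma G_filter_not {t : Multiset ℕ} :
    (G t).filter (fun i => ¬ 3 ∣ i) =
      (t.filter (fun i => ¬ 3 ∣ i)).dedup.bind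
        (fun m => (((t.filter (fun i => ¬ 3 ∣ i)).count m).bitIndices.map (fun k => 2 ^ k * m) :
          List ℕ)) := by
  have e1 : (t.filter (3 ∣ ·)).filter (fun i => ¬ 3 ∣ i) = 0 :=
    Multiset.filter_eq_nil.2 (fun a ha => not_not.2 (Multiset.mem_filter.1 ha).2)
  have e2 : ((t.filter (fun i => ¬ 3 ∣ i)).dedup.bind
      (fun m => (((t.filter (fun i => ¬ 3 ∣ i)).count m).bitIndices.map (fun k => 2 ^ k * m) :
        List ℕ))).filter (fun i => ¬ 3 ∣ i) = (t.filter (fun i => ¬ 3 ∣ i)).dedup.bind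
      (fun m => (((t.filter (fun i => ¬ 3 ∣ i)).count m).bitIndices.map (fun k => 2 ^ k * m) :
        List ℕ)) := by
    refine Multiset.filter_eq_self.2 (fun a ha => ?_)
    obtain ⟨m, k, hm, -, rfl⟩ := bindG_mem ha
    exact three_not_dvd_pow_mul k (Multiset.mem_filter.1 (Multiset.mem_dedup.1 hm)).2
  rw [G, Multiset.filter_add, e1, e2, zero_add]

lemma G_sum {t : Multiset ℕ} : (G t).sum = t.sum := by
  rw [G, Multiset.sum_add, Multiset.sum_bind]
  have h1 : ((t.filter (fun i => ¬ 3 ∣ i)).dedup.map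
      (fun m => ((((t.filter (fun i => ¬ 3 ∣ i)).count m).bitIndices.map
        (fun k => 2 ^ k * m) : List ℕ) : Multiset ℕ).sum)) =
      (t.filter (fun i => ¬ 3 ∣ i)).dedup.map
        (fun m => (t.filter (fun i => ¬ 3 ∣ i)).count m • m) := by
    refine Multiset.map_congr rfl (fun m _ => ?_)
    rw [Multiset.sum_coe, List.sum_map_mul_right, Nat.twoPowSum_bitIndices, smul_eq_mul]
  rw [h1]
  have h2 : ((t.filter (fun i => ¬ 3 ∣ i)).dedup.map
      (fun m => (t.filter (fun i => ¬ 3 ∣ i)).count m • m)).sum =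
      (t.filter (fun i => ¬ 3 ∣ i)).sum := by
    rw [← Multiset.toFinset_val, ← Finset.sum_eq_multiset_sum]
    conv_rhs => rw [← Multiset.map_id (t.filter (fun i => ¬ 3 ∣ i))]
    rw [Finset.sum_multiset_map_count]
    rfl
  rw [h2, ← Multiset.sum_add, Multiset.filter_add_not]

lemma G_pos {t : Multiset ℕ} (h0 : ∀ i ∈ t, i ≠ 0) : ∀ i ∈ G t, i ≠ 0 := by
  intro i hi
  rcases Multiset.mem_add.1 hi with h | h
  · exact h0 i (Multiset.mem_filter.1 h).1
  · obtain ⟨m, k, hm, -, rfl⟩ := bindG_mem h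
    have hm0 : m ≠ 0 := h0 m (Multiset.mem_filter.1 (Multiset.mem_dedup.1 hm)).1
    positivity

end GlaisherAux

namespace GlaisherAux
open Multiset

lemma list_nodup {m r : ℕ} (hm : ¬ 2 ∣ m) (hm0 : m ≠ 0) :
    (r.bitIndices.map (fun k => 2 ^ k * m)).Nodup := by
  refine List.Nodup.map (fun x y hxy => ?_) (Nat.bitIndices_sorted.nodup)
  exact (pow_mul_inj hm hm0 hm hm0 hxy).1

lemma G_cond {t : Multiset ℕ} (hodd : ∀ i ∈ t, ¬ 3 ∣ i → ¬ 2 ∣ i) (h0 : ∀ i ∈ t, i ≠ 0) :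
    ∀ i ∈ G t, ¬ 3 ∣ i → (G t).count i = 1 := by
  intro i hi h3
  have hnotA : i ∉ t.filter (3 ∣ ·) := fun h => h3 (Multiset.mem_filter.1 h).2
  have hibind : i ∈ (t.filter (fun i => ¬ 3 ∣ i)).dedup.bind
      (fun m => (((t.filter (fun i => ¬ 3 ∣ i)).count m).bitIndices.map (fun k => 2 ^ k * m) :
        List ℕ)) := by
    rcases Multiset.mem_add.1 hi with h | h
    · exact absurd h hnotA
    · exact h
  obtain ⟨m1, k1, hm1, hk1, hieq⟩ := bindG_mem hibind
  obtain ⟨hm1odd, hm10, hm13⟩ := Bt_mem hodd h0 (Multiset.mem_dedup.1 hm1)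
  rw [G, Multiset.count_add, Multiset.count_eq_zero_of_notMem hnotA, zero_add,
    Multiset.count_bind]
  have hmapc : ((t.filter (fun i => ¬ 3 ∣ i)).dedup.map
      (fun m => Multiset.count i
        ((((t.filter (fun i => ¬ 3 ∣ i)).count m).bitIndices.map (fun k => 2 ^ k * m) :
          List ℕ) : Multiset ℕ))) =
      (t.filter (fun i => ¬ 3 ∣ i)).dedup.map (fun m => if m = m1 then 1 else 0) := by
    refine Multiset.map_congr rfl (fun m hm => ?_)
    obtain ⟨hmodd, hm0, hm3⟩ := Bt_mem hodd h0 (Multiset.mem_dedup.1 hm)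
    by_cases h : m = m1
    · subst h
      rw [if_pos rfl]
      refine Multiset.count_eq_one_of_mem (Multiset.coe_nodup.2 (list_nodup hmodd hm0)) ?_
      rw [Multiset.mem_coe, List.mem_map]
      exact ⟨k1, hk1, hieq.symm⟩
    · rw [if_neg h]
      refine Multiset.count_eq_zero_of_notMem (fun hmem => ?_)
      rw [Multiset.mem_coe, List.mem_map] at hmem
      obtain ⟨k, -, hki⟩ := hmem
      rw [hieq] at hki
      exact h (pow_mul_inj hmodd hm0 hm1odd hm10 hki).2
  rw [hmapc, sum_map_indicator (Multiset.nodup_dedup _) m1 (fun _ => 1), if_pos hm1]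

end GlaisherAux

namespace GlaisherAux
open Multiset

lemma GF {s : Multiset ℕ} (h0 : ∀ i ∈ s, i ≠ 0)
    (hdist : ∀ i ∈ s, ¬ 3 ∣ i → s.count i = 1) : G (F s) = s := by
  set B := s.filter (fun i => ¬ 3 ∣ i) with hB
  have hBnodup : B.Nodup := by
    refine Multiset.nodup_iff_count_le_one.2 (fun a => ?_)
    by_cases ha : a ∈ B
    · obtain ⟨has, ha3⟩ := Multiset.mem_filter.1 ha
      rw [hB, Multiset.count_filter_of_pos (p := fun i => ¬ 3 ∣ i) ha3]
      exact le_of_eq (hdist a has ha3)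
    · rw [Multiset.count_eq_zero_of_notMem ha]
      omega
  set BE := B.bind expand with hBE
  have hBE_mem : ∀ m ∈ BE, ¬ 2 ∣ m ∧ ¬ 3 ∣ m ∧ m ≠ 0 := fun m hm => bindExpand_mem h0 hm
  have rcount : ∀ m : ℕ, BE.count m = ((B.filter (fun b => u b = m)).map (fun b => 2 ^ v b)).sum := by
    intro m
    rw [hBE, Multiset.count_bind]
    have : B.map (fun b => (expand b).count m) =
        B.map (fun b => if u b = m then 2 ^ v b else 0) :=
      Multiset.map_congr rfl (fun b _ => by rw [expand, Multiset.count_replicate])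
    rw [this, sum_map_ite_filter]
  have Kn : ∀ m : ℕ, ((B.filter (fun b => u b = m)).map v).Nodup := by
    intro m
    refine Multiset.Nodup.map_on ?_ (hBnodup.filter _)
    intro b hb b' hb' hvb
    obtain ⟨hbB, hub⟩ := Multiset.mem_filter.1 hb
    obtain ⟨hbB', hub'⟩ := Multiset.mem_filter.1 hb'
    have hb0 : b ≠ 0 := h0 b (Multiset.mem_filter.1 hbB).1
    have hb0' : b' ≠ 0 := h0 b' (Multiset.mem_filter.1 hbB').1
    rw [← decomp hb0, ← decomp hb0', hvb, hub, hub']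
  have bitsiff : ∀ m : ℕ, ¬ 2 ∣ m → m ≠ 0 → ∀ j : ℕ,
      (j ∈ (BE.count m).bitIndices ↔ 2 ^ j * m ∈ B) := by
    intro m hm hm0 j
    have : (B.filter (fun b => u b = m)).map (fun b => 2 ^ v b) =
        ((B.filter (fun b => u b = m)).map v).map (2 ^ ·) := by
      rw [Multiset.map_map]; rfl
    rw [rcount m, this, mem_bitIndices_sum (Kn m)]
    constructor
    · intro hj
      rw [Multiset.mem_map] at hj
      obtain ⟨b, hb, rfl⟩ := hj
      obtain ⟨hbB, hub⟩ := Multiset.mem_filter.1 hb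
      have hb0 : b ≠ 0 := h0 b (Multiset.mem_filter.1 hbB).1
      rwa [← hub, decomp hb0]
    · intro hmem
      rw [Multiset.mem_map]
      exact ⟨2 ^ j * m, Multiset.mem_filter.2 ⟨hmem, u_spec hm hm0 j⟩, v_spec hm hm0 j⟩
  rw [G, F_filter_div h0, F_filter_not h0, ← hB, ← hBE]
  have hD : BE.dedup.bind
      (fun m => ((BE.count m).bitIndices.map (fun k => 2 ^ k * m) : List ℕ)) = B := by
    refine Multiset.ext.2 (fun a => ?_)
    rw [Multiset.count_bind]
    by_cases ha0 : a = 0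
    · subst ha0
      have h1 : BE.dedup.map (fun m => Multiset.count 0
          (((BE.count m).bitIndices.map (fun k => 2 ^ k * m) : List ℕ) : Multiset ℕ)) =
          BE.dedup.map (fun _ => 0) := by
        refine Multiset.map_congr rfl (fun m hm => ?_)
        obtain ⟨-, -, hm0⟩ := hBE_mem m (Multiset.mem_dedup.1 hm)
        refine Multiset.count_eq_zero_of_notMem (fun hmem => ?_)
        rw [Multiset.mem_coe, List.mem_map] at hmem
        obtain ⟨k, -, hk⟩ := hmem
        exact Nat.mul_ne_zero (by positivity) hm0 hk
      rw [h1, Multiset.count_eq_zero_of_notMem (fun h => h0 0 (Multiset.mem_filter.1 h).1 rfl)]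
      simp
    · have haeq : 2 ^ v a * u a = a := decomp ha0
      have hm0odd : ¬ 2 ∣ u a := u_odd ha0
      have hm00 : u a ≠ 0 := (u_pos ha0).ne'
      have h1 : BE.dedup.map (fun m => Multiset.count a
          (((BE.count m).bitIndices.map (fun k => 2 ^ k * m) : List ℕ) : Multiset ℕ)) =
          BE.dedup.map (fun m => if m = u a then
            (if v a ∈ (BE.count (u a)).bitIndices then 1 else 0) else 0) := by
        refine Multiset.map_congr rfl (fun m hm => ?_)
        obtain ⟨hmodd, hm3, hm0⟩ := hBE_mem m (Multiset.mem_dedup.1 hm)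
        by_cases h : m = u a
        · subst h
          rw [if_pos rfl]
          by_cases hj : v a ∈ (BE.count (u a)).bitIndices
          · rw [if_pos hj]
            refine Multiset.count_eq_one_of_mem (Multiset.coe_nodup.2 (list_nodup hmodd hm0)) ?_
            rw [Multiset.mem_coe, List.mem_map]
            exact ⟨v a, hj, haeq⟩
          · rw [if_neg hj]
            refine Multiset.count_eq_zero_of_notMem (fun hmem => ?_)
            rw [Multiset.mem_coe, List.mem_map] at hmem
            obtain ⟨k, hk, hka⟩ := hmem
            obtain ⟨rfl, -⟩ := pow_mul_inj hmodd hm0 hm0odd hm00 (hka.trans haeq.symm)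
            exact hj hk
        · rw [if_neg h]
          refine Multiset.count_eq_zero_of_notMem (fun hmem => ?_)
          rw [Multiset.mem_coe, List.mem_map] at hmem
          obtain ⟨k, -, hka⟩ := hmem
          exact h (pow_mul_inj hmodd hm0 hm0odd hm00 (hka.trans haeq.symm)).2
      rw [h1, sum_map_indicator (Multiset.nodup_dedup _) (u a) _]
      by_cases haB : a ∈ B
      · have hj : v a ∈ (BE.count (u a)).bitIndices :=
          (bitsiff (u a) hm0odd hm00 (v a)).2 (by rwa [haeq])
        have hmem : u a ∈ BE.dedup := by
          rw [Multiset.mem_dedup, hBE]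
          refine Multiset.mem_bind.2 ⟨a, haB, ?_⟩
          rw [expand]
          exact Multiset.mem_replicate.2 ⟨by positivity, rfl⟩
        rw [if_pos hmem, if_pos hj, Multiset.count_eq_one_of_mem hBnodup haB]
      · have hj : v a ∉ (BE.count (u a)).bitIndices := fun hj => haB (by
          rw [← haeq]; exact (bitsiff (u a) hm0odd hm00 (v a)).1 hj)
        rw [Multiset.count_eq_zero_of_notMem haB]
        by_cases hmem : u a ∈ BE.dedup <;> simp [hmem, hj]
  rw [hD, hB, Multiset.filter_add_not]

end GlaisherAux

namespace GlaisherAux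
open Multiset

lemma FG {t : Multiset ℕ} (hodd : ∀ i ∈ t, ¬ 3 ∣ i → ¬ 2 ∣ i) (h0 : ∀ i ∈ t, i ≠ 0) :
    F (G t) = t := by
  set Bt := t.filter (fun i => ¬ 3 ∣ i) with hBt
  rw [F, G_filter_div, G_filter_not, ← hBt, Multiset.bind_assoc]
  have inner : ∀ m ∈ Bt.dedup,
      (((Bt.count m).bitIndices.map (fun k => 2 ^ k * m) : List ℕ) : Multiset ℕ).bind expand =
        Multiset.replicate (Bt.count m) m := by
    intro m hm
    obtain ⟨hmodd, hm0, hm3⟩ := Bt_mem hodd h0 (Multiset.mem_dedup.1 hm)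
    rw [← Multiset.map_coe, Multiset.bind_map]
    have : (((Bt.count m).bitIndices : List ℕ) : Multiset ℕ).bind
        (fun k => expand (2 ^ k * m)) =
        (((Bt.count m).bitIndices : List ℕ) : Multiset ℕ).bind
        (fun k => Multiset.replicate (2 ^ k) m) := by
      refine Multiset.bind_congr (fun k _ => ?_)
      rw [expand, v_spec hmodd hm0, u_spec hmodd hm0]
    rw [this, bind_replicate_const (2 ^ ·) m, Multiset.map_coe, Multiset.sum_coe,
      Nat.twoPowSum_bitIndices]
  rw [Multiset.bind_congr inner]
  have hfin : Bt.dedup.bind (fun m => Multiset.replicate (Bt.count m) m) = Bt := by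
    refine Multiset.ext.2 (fun a => ?_)
    rw [Multiset.count_bind]
    have : Bt.dedup.map (fun m => Multiset.count a (Multiset.replicate (Bt.count m) m)) =
        Bt.dedup.map (fun m => if m = a then Bt.count m else 0) :=
      Multiset.map_congr rfl (fun m _ => by rw [Multiset.count_replicate])
    rw [this, sum_map_indicator (Multiset.nodup_dedup _) a _]
    by_cases ha : a ∈ Bt.dedup
    · rw [if_pos ha]
    · rw [if_neg ha]
      exact (Multiset.count_eq_zero_of_notMem (fun h => ha (Multiset.mem_dedup.2 h))).symm
  rw [hfin, hBt, Multiset.filter_add_not]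

end GlaisherAux

/-- The number of partitions of `n` in which every part not divisible by 3 appears
exactly once (parts divisible by 3 unrestricted) equals the number of partitions of
`n` into parts congruent to 0, 1, 3, or 5 modulo 6. -/
theorem distinct_coprime_three_parts_eq_mod_six (n : ℕ) :
    Nat.card {p : n.Partition // ∀ i ∈ p.parts, ¬ 3 ∣ i → p.parts.count i = 1} =
      Nat.card {p : n.Partition //
        ∀ i ∈ p.parts, i % 6 = 0 ∨ i % 6 = 1 ∨ i % 6 = 3 ∨ i % 6 = 5} := by
  have mod6 : ∀ i : ℕ, (i % 6 = 0 ∨ i % 6 = 1 ∨ i % 6 = 3 ∨ i % 6 = 5) ↔ (3 ∣ i ∨ ¬ 2 ∣ i) :=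
    fun i => by omega
  refine Nat.card_congr ?_
  refine
    { toFun := fun p =>
        ⟨⟨GlaisherAux.F p.1.parts,
          fun {i} hi => Nat.pos_of_ne_zero
            (GlaisherAux.F_pos (fun j hj => (p.1.parts_pos hj).ne') i hi),
          by rw [GlaisherAux.F_sum (fun j hj => (p.1.parts_pos hj).ne')]; exact p.1.parts_sum⟩,
        fun i hi => (mod6 i).2
          (GlaisherAux.F_cond (fun j hj => (p.1.parts_pos hj).ne') i hi)⟩,
      invFun := fun q =>
        ⟨⟨GlaisherAux.G q.1.parts,
          fun {i} hi => Nat.pos_of_ne_zero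
            (GlaisherAux.G_pos (fun j hj => (q.1.parts_pos hj).ne') i hi),
          by rw [GlaisherAux.G_sum]; exact q.1.parts_sum⟩,
        fun i hi h3 =>
          GlaisherAux.G_cond
            (fun j hj hj3 => (or_iff_right hj3).1 ((mod6 j).1 (q.2 j hj)))
            (fun j hj => (q.1.parts_pos hj).ne') i hi h3⟩,
      left_inv := fun p => by
        refine Subtype.ext (Nat.Partition.ext ?_)
        exact GlaisherAux.GF (fun j hj => (p.1.parts_pos hj).ne') p.2,
      right_inv := fun q => by
        refine Subtype.ext (Nat.Partition.ext ?_)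
        exact GlaisherAux.FG
          (fun j hj hj3 => (or_iff_right hj3).1 ((mod6 j).1 (q.2 j hj)))
          (fun j hj => (q.1.parts_pos hj).ne') }
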